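/- Let V(S,I) = ½(S − Ŝ₀ + I)² + aI with a = (2(μ+α)+γ+p₀)/β₀. Along solutions of the constant-coefficient SIRS system, V' = −(S−Ŝ₀)²(p₀+μ+α) − I²(γ+α+μ) − aβ₀I((γ+μ)/β₀ − Ŝ₀). In particular, if β₀Ŝ₀ ≤ γ+μ then V' ≤ 0 on the simplex, with V' < 0 whenever (S,I) ≠ (Ŝ₀,0) and I > 0. -/

import Mathlib

theorem sirs_lyapunov_derivative
    (μ α γ β₀ p₀ : ℝ) (hμ : 0 < μ) (hα : 0 < α) (hγ : 0 < γ)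
    (hβ : 0 < β₀) (hp : 0 ≤ p₀)
    (S0 : ℝ) (hS0 : S0 = (μ + α) / (p₀ + μ + α))
    (a : ℝ) (ha : a = (2 * (μ + α) + γ + p₀) / β₀)
    (S I : ℝ → ℝ) (t : ℝ)
    (hS : HasDerivAt S
      (μ + α * (1 - S t - I t) - β₀ * I t * S t - p₀ * S t - μ * S t) t)
    (hI : HasDerivAt I (β₀ * I t * S t - (γ + μ) * I t) t) :
    HasDerivAt (fun τ => (1 / 2) * (S τ - S0 + I τ) ^ 2 + a * I τ)
      (-(S t - S0) ^ 2 * (p₀ + μ + α) - (I t) ^ 2 * (γ + α + μ)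
        - a * β₀ * I t * ((γ + μ) / β₀ - S0) ) t
    ∧ (β₀ * S0 ≤ γ + μ →
        (0 ≤ I t →
          -(S t - S0) ^ 2 * (p₀ + μ + α) - (I t) ^ 2 * (γ + α + μ)
            - a * β₀ * I t * ((γ + μ) / β₀ - S0) ≤ 0)
        ∧ ((S t, I t) ≠ (S0, 0) → 0 < I t →
          -(S t - S0) ^ 2 * (p₀ + μ + α) - (I t) ^ 2 * (γ + α + μ)
            - a * β₀ * I t * ((γ + μ) / β₀ - S0) < 0)) := by
  have hβ' : β₀ ≠ 0 := ne_of_gt hβ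
  have hc : (0:ℝ) < p₀ + μ + α := by linarith
  have hS0' : S0 * (p₀ + μ + α) = μ + α := by
    rw [hS0]; field_simp
  have haβ : a * β₀ = 2 * (μ + α) + γ + p₀ := by
    rw [ha]; field_simp
  constructor
  · have h1 : HasDerivAt (fun τ => S τ - S0 + I τ)
        ((μ + α * (1 - S t - I t) - β₀ * I t * S t - p₀ * S t - μ * S t)
          + (β₀ * I t * S t - (γ + μ) * I t)) t := (hS.sub_const S0).add hI
    have h2 := ((h1.pow 2).const_mul (1/2 : ℝ)).add (hI.const_mul a)
    refine h2.congr_deriv ?_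
    norm_num
    subst hS0 ha
    field_simp
    ring
  · intro hle
    have hS0le : S0 * β₀ ≤ γ + μ := by linarith [hle]
    have hterm : 0 ≤ a * β₀ * ((γ + μ) / β₀ - S0) := by
      have : 0 ≤ (γ + μ) / β₀ - S0 := by
        rw [le_sub_iff_add_le, zero_add, le_div_iff₀ hβ]; linarith
      have ha0 : 0 ≤ a * β₀ := by rw [haβ]; linarith
      exact mul_nonneg ha0 this
    constructor
    · intro hI0
      nlinarith [sq_nonneg (S t - S0), sq_nonneg (I t), mul_nonneg hterm hI0]
    · intro _ hIpos
      nlinarith [sq_nonneg (S t - S0), mul_nonneg hterm hIpos.le, pow_pos hIpos 2]
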